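/- Let a < b be real numbers and define ν(z) = ((z−b)/(z−a))^{1/4} using the principal branch of the complex power, and N(z) = (1/(2ν(z)))·[[1, i],[−i, 1]] + (ν(z)/2)·[[1, −i],[i, 1]] (2×2 complex matrices). Then: (i) N is analytic on ℂ∖[a,b]; (ii) det N(z) = 1 for all z ∈ ℂ∖[a,b]; (iii) N(z) → I as z → ∞; and (iv) for every x ∈ (a,b) the boundary values N₊(x) = lim_{ε→0⁺} N(x+iε) and N₋(x) = lim_{ε→0⁺} N(x−iε) exist and satisfy N₊(x) = N₋(x)·[[0, 1],[−1, 0]]. That is, N solves the Riemann–Hilbert problem with constant jump [[0,1],[−1,0]] on (a,b) and N(∞) = I. -/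

import Mathlib

open Complex Filter Topology

/-- `ν(z) = ((z−b)/(z−a))^{1/4}`, principal branch of the complex power. -/
noncomputable def nuRH (a b : ℝ) (z : ℂ) : ℂ :=
  ((z - (b : ℂ)) / (z - (a : ℂ))) ^ ((1 : ℂ) / 4)

/-- The global parametrix `N(z) = (1/(2ν(z)))·[[1,i],[−i,1]] + (ν(z)/2)·[[1,−i],[i,1]]`. -/
noncomputable def NRH (a b : ℝ) (z : ℂ) : Matrix (Fin 2) (Fin 2) ℂ :=
  (1 / (2 * nuRH a b z)) • !![1, Complex.I; -Complex.I, 1] +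
    (nuRH a b z / 2) • !![1, -Complex.I; Complex.I, 1]

lemma slit_aux (a b : ℝ) (hab : a < b) {z : ℂ}
    (hz : z ∉ (fun t : ℝ => (t : ℂ)) '' Set.Icc a b) :
    ((z - (b : ℂ)) / (z - (a : ℂ))) ∈ Complex.slitPlane := by
  have hza : z ≠ (a : ℂ) := by
    rintro rfl; exact hz ⟨a, ⟨le_refl a, hab.le⟩, rfl⟩
  rw [Complex.mem_slitPlane_iff]
  by_contra h
  push_neg at h
  obtain ⟨hre, him⟩ := h
  set w := (z - (b : ℂ)) / (z - (a : ℂ)) with hwdef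
  have hne : z - (a : ℂ) ≠ 0 := sub_ne_zero.2 hza
  have hw : z - (b : ℂ) = w * (z - (a : ℂ)) := (div_eq_iff hne).mp rfl
  set t := w.re with htdef
  have hwre : w = (t : ℂ) := Complex.ext (by simp [htdef]) (by simp [him])
  have ht : t ≤ 0 := hre
  have h1t : (0 : ℝ) < 1 - t := by linarith
  have h1t' : (1 : ℂ) - (t : ℂ) ≠ 0 := by
    exact_mod_cast (show ((1 - t : ℝ) : ℂ) ≠ 0 by exact_mod_cast h1t.ne')
  have hz_eq : z = (((b - t * a) / (1 - t) : ℝ) : ℂ) := by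
    rw [hwre] at hw
    push_cast
    rw [eq_div_iff h1t']
    linear_combination hw
  apply hz
  refine ⟨(b - t * a) / (1 - t), ⟨?_, ?_⟩, hz_eq.symm⟩
  · rw [le_div_iff₀ h1t]; nlinarith
  · rw [div_le_iff₀ h1t]; nlinarith


lemma nu_ne (a b : ℝ) (hab : a < b) {z : ℂ}
    (hz : z ∉ (fun t : ℝ => (t : ℂ)) '' Set.Icc a b) : nuRH a b z ≠ 0 := by
  have h := Complex.slitPlane_ne_zero (slit_aux a b hab hz)
  simp [nuRH, Complex.cpow_eq_zero_iff, h]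

lemma nu_analytic (a b : ℝ) (hab : a < b) :
    AnalyticOnNhd ℂ (nuRH a b) ((fun t : ℝ => (t : ℂ)) '' Set.Icc a b)ᶜ := by
  intro z hz
  have hza : z ≠ (a : ℂ) := by
    rintro rfl; exact hz ⟨a, ⟨le_refl a, hab.le⟩, rfl⟩
  exact (((analyticAt_id.sub analyticAt_const).div
    (analyticAt_id.sub analyticAt_const) (sub_ne_zero.2 hza)).cpow
    analyticAt_const (slit_aux a b hab hz))

lemma Fcont {A B : Matrix (Fin 2) (Fin 2) ℂ} {c : ℂ} (hc : c ≠ 0) :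
    ContinuousAt (fun w : ℂ => (1 / (2 * w)) • A + (w / 2) • B) c := by
  exact ((continuousAt_const.div (continuousAt_const.mul continuousAt_id)
      (mul_ne_zero two_ne_zero hc)).smul continuousAt_const).add
    ((continuousAt_id.div continuousAt_const two_ne_zero).smul continuousAt_const)

lemma F_one : ((1 : ℂ) / (2 * 1)) • !![1, Complex.I; -Complex.I, 1] +
    (((1:ℂ)) / 2) • !![1, -Complex.I; Complex.I, 1] = (1 : Matrix (Fin 2) (Fin 2) ℂ) := by
  ext i j
  fin_cases i <;> fin_cases j <;>
    simp [Matrix.one_apply] <;> ring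

lemma L_key {w : ℂ} (hre : w.re < 0) (him : w.im = 0) :
    w ^ ((1:ℂ)/4) = Complex.I * (starRingEnd ℂ) (w ^ ((1:ℂ)/4)) := by
  have hw0 : w ≠ 0 := fun h => by simp [h] at hre
  have hlog : Complex.log w = (Real.log ‖w‖ : ℂ)
      + (Real.pi : ℂ) * Complex.I := by
    rw [Complex.log, Complex.arg_eq_pi_iff.mpr ⟨hre, him⟩]
  rw [Complex.cpow_def_of_ne_zero hw0, ← Complex.exp_conj]
  have hconj : (starRingEnd ℂ) (Complex.log w * (1/4)) =
      ((Real.log ‖w‖ : ℂ) - (Real.pi : ℂ) * Complex.I) * (1/4) := by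
    rw [hlog]
    simp only [map_mul, map_add, Complex.conj_ofReal, Complex.conj_I, map_div₀, map_one,
      map_ofNat]
    ring
  rw [hconj, hlog]
  have hI : Complex.I = Complex.exp (((Real.pi/2 : ℝ) : ℂ) * Complex.I) := by
    rw [Complex.exp_mul_I]
    simp [← Complex.ofReal_cos, ← Complex.ofReal_sin, Real.cos_pi_div_two, Real.sin_pi_div_two]
  nth_rewrite 2 [hI]
  rw [← Complex.exp_add]
  congr 1
  push_cast
  ring

lemma jump_id {c : ℂ} (hc : c ≠ 0) :
    (1 / (2 * (Complex.I * c))) • !![1, Complex.I; -Complex.I, 1] + ((Complex.I * c) / 2) • !![1, -Complex.I; Complex.I, 1] =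
    ((1 / (2 * c)) • !![1, Complex.I; -Complex.I, 1] +
      (c / 2) • !![1, -Complex.I; Complex.I, 1]) * !![0, 1; -1, 0] := by
  ext i j
  fin_cases i <;> fin_cases j <;>
    · simp only [Matrix.mul_apply, Fin.sum_univ_two, Matrix.add_apply, Matrix.smul_apply,
        smul_eq_mul, Matrix.cons_val', Matrix.cons_val_zero, Matrix.cons_val_one,
        Matrix.head_cons, Matrix.empty_val', Matrix.cons_val_fin_one, Matrix.head_fin_const,
        Matrix.of_apply, Fin.zero_eta, Fin.mk_one]
      field_simp
      ring_nf
      have h3 : Complex.I^3 = -Complex.I := by rw [pow_succ, Complex.I_sq]; ring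
      try simp only [Complex.I_sq, h3]
      try ring_nf

/-- **The global parametrix solves the Riemann–Hilbert problem with jump
`[[0,1],[−1,0]]` on `(a,b)` and `N(∞) = I`:** (i) `N` is analytic on `ℂ∖[a,b]`;
(ii) `det N = 1` there; (iii) `N(z) → I` as `z → ∞`; (iv) for `x ∈ (a,b)` the boundary
values `N₊(x), N₋(x)` from above and below exist and satisfy
`N₊(x) = N₋(x)·[[0,1],[−1,0]]`. -/
theorem global_parametrix_RHP (a b : ℝ) (hab : a < b) :
    (∀ p q : Fin 2, AnalyticOnNhd ℂ (fun z => NRH a b z p q)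
      ((fun t : ℝ => (t : ℂ)) '' Set.Icc a b)ᶜ) ∧
    (∀ z ∈ ((fun t : ℝ => (t : ℂ)) '' Set.Icc a b)ᶜ, (NRH a b z).det = 1) ∧
    Tendsto (NRH a b) (Bornology.cobounded ℂ) (nhds 1) ∧
    (∀ x ∈ Set.Ioo a b, ∃ Np Nm : Matrix (Fin 2) (Fin 2) ℂ,
      Tendsto (fun ε : ℝ => NRH a b ((x : ℂ) + ε * Complex.I))
        (nhdsWithin 0 (Set.Ioi 0)) (nhds Np) ∧
      Tendsto (fun ε : ℝ => NRH a b ((x : ℂ) - ε * Complex.I))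
        (nhdsWithin 0 (Set.Ioi 0)) (nhds Nm) ∧
      Np = Nm * !![0, 1; -1, 0]) := by
  refine ⟨?_, ?_, ?_, ?_⟩
  · intro p q

    have hnu := nu_analytic a b hab
    simp only [NRH, Matrix.add_apply, Matrix.smul_apply, smul_eq_mul]
    exact ((analyticOnNhd_const.div (analyticOnNhd_const.mul hnu)
        (fun z hz => mul_ne_zero two_ne_zero (nu_ne a b hab hz))).mul
        analyticOnNhd_const).add
      ((hnu.div analyticOnNhd_const (fun z _ => two_ne_zero)).mul analyticOnNhd_const)
  · intro z hz
    have h := nu_ne a b hab hz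
    simp only [NRH, Matrix.det_fin_two, Matrix.add_apply, Matrix.smul_apply, smul_eq_mul,
      Matrix.cons_val', Matrix.cons_val_zero, Matrix.cons_val_one, Matrix.head_cons,
      Matrix.empty_val', Matrix.cons_val_fin_one, Matrix.head_fin_const, Matrix.of_apply]
    field_simp
    ring_nf
    linear_combination (nuRH a b z ^ 4 - 2 * nuRH a b z ^ 2 + 1) * Complex.I_sq
  ·
    have h1 : Tendsto (fun z : ℂ => z - (a:ℂ)) (Bornology.cobounded ℂ) (Bornology.cobounded ℂ) := by
      rw [← tendsto_norm_atTop_iff_cobounded]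
      apply tendsto_atTop_mono (fun z => ?_)
        (tendsto_atTop_add_const_right _ (-‖(a:ℂ)‖) tendsto_norm_cobounded_atTop)
      have := norm_sub_norm_le z (a:ℂ)
      linarith
    have h2 : Tendsto (fun z : ℂ => (z - (a:ℂ))⁻¹) (Bornology.cobounded ℂ) (nhds 0) :=
      tendsto_inv₀_cobounded.comp h1
    have hbase : Tendsto (fun z : ℂ => (z - (b:ℂ)) / (z - (a:ℂ)))
        (Bornology.cobounded ℂ) (nhds 1) := by
      have h3 : Tendsto (fun z : ℂ => 1 + ((a:ℂ) - b) * (z - (a:ℂ))⁻¹)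
          (Bornology.cobounded ℂ) (nhds 1) := by
        have := (h2.const_mul ((a:ℂ) - b)).const_add 1
        simpa using this
      apply h3.congr'
      filter_upwards [h1.eventually_ne_cobounded 0] with z hz
      have hz' : z - (a:ℂ) ≠ 0 := hz
      field_simp
      ring
    have hnu : Tendsto (nuRH a b) (Bornology.cobounded ℂ) (nhds 1) := by
      have hc : ContinuousAt (fun w : ℂ => w ^ ((1:ℂ)/4)) 1 :=
        continuousAt_cpow_const (by simp [Complex.mem_slitPlane_iff])
      have := hc.tendsto.comp hbase
      rw [Complex.one_cpow] at this
      exact this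
    have := (Fcont (A := !![1, Complex.I; -Complex.I, 1]) (B := !![1, -Complex.I; Complex.I, 1])
      one_ne_zero).tendsto.comp hnu
    rw [← F_one]
    exact this
  · intro x hx
    obtain ⟨hax, hxb⟩ := hx
    set w₀ : ℂ := ((x:ℂ) - b) / ((x:ℂ) - a) with hw₀def
    have hxa' : ((x:ℂ) - a) ≠ 0 := by
      rw [sub_ne_zero]; exact_mod_cast (ne_of_gt hax)
    have hw₀r : w₀ = (((x - b) / (x - a) : ℝ) : ℂ) := by push_cast [hw₀def]; ring
    have hval : (x - b) / (x - a) < 0 :=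
      div_neg_of_neg_of_pos (by linarith) (by linarith)
    have hre : w₀.re < 0 := by
      simp only [hw₀r, Complex.ofReal_re]; exact hval
    have him : w₀.im = 0 := by
      simp only [hw₀r, Complex.ofReal_im]
    have hw₀0 : w₀ ≠ 0 := fun h => by simp [h] at hre
    set L : ℂ := w₀ ^ ((1:ℂ)/4) with hLdef
    have hL0 : L ≠ 0 := by
      rw [hLdef, Ne, Complex.cpow_eq_zero_iff]
      simp [hw₀0]
    have hcL0 : (starRingEnd ℂ) L ≠ 0 := by simpa using hL0
    set g : ℝ → ℂ := fun ε => ((x:ℂ) + ε * Complex.I - b) / ((x:ℂ) + ε * Complex.I - a)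
      with hgdef
    have hden : ∀ ε : ℝ, ε ≠ 0 → ((x:ℂ) + ε * Complex.I - a) ≠ 0 := by
      intro ε hε h
      have : ((x:ℂ) + ε * Complex.I - a).im = 0 := by rw [h]; simp
      simp at this
      exact hε this
    have hgim : ∀ ε : ℝ, 0 < ε → 0 < (g ε).im := by
      intro ε hε
      have hq : 0 < Complex.normSq ((x:ℂ) + ε * Complex.I - a) :=
        Complex.normSq_pos.2 (hden ε hε.ne')
      have : (g ε).im = ε * (b - a) / Complex.normSq ((x:ℂ) + ε * Complex.I - a) := by
        rw [hgdef]
        simp only [Complex.div_im]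
        simp
        ring
      rw [this]
      exact div_pos (by nlinarith) hq
    have hgne : ∀ ε : ℝ, 0 < ε → g ε ≠ 0 := by
      intro ε hε h
      have := hgim ε hε
      rw [h] at this
      simp at this
    have hgt : Tendsto g (nhdsWithin 0 (Set.Ioi 0)) (nhdsWithin w₀ { z : ℂ | 0 ≤ z.im }) := by
      rw [tendsto_nhdsWithin_iff]
      constructor
      · have hc : ContinuousAt g 0 := by
          apply ContinuousAt.div
          · fun_prop
          · fun_prop
          · simpa using hxa'
        have hg0 : g 0 = w₀ := by simp [hgdef, hw₀def]
        have := hc.tendsto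
        rw [hg0] at this
        exact this.mono_left nhdsWithin_le_nhds
      · filter_upwards [self_mem_nhdsWithin] with ε hε
        exact (hgim ε hε).le
    have hlog : Tendsto (fun ε : ℝ => Complex.log (g ε)) (nhdsWithin 0 (Set.Ioi 0))
        (nhds (Complex.log w₀)) :=
      (Complex.continuousWithinAt_log_of_re_neg_of_im_zero hre him).tendsto.comp hgt
    have hnup : Tendsto (fun ε : ℝ => nuRH a b ((x:ℂ) + ε * Complex.I))
        (nhdsWithin 0 (Set.Ioi 0)) (nhds L) := by
      have h1 : Tendsto (fun ε : ℝ => Complex.exp (Complex.log (g ε) * (1/4)))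
          (nhdsWithin 0 (Set.Ioi 0)) (nhds (Complex.exp (Complex.log w₀ * (1/4)))) :=
        (Complex.continuous_exp.tendsto _).comp (hlog.mul_const _)
      rw [hLdef, Complex.cpow_def_of_ne_zero hw₀0]
      apply h1.congr'
      filter_upwards [self_mem_nhdsWithin] with ε hε
      rw [show nuRH a b ((x:ℂ) + ε * Complex.I) = (g ε) ^ ((1:ℂ)/4) from rfl,
        Complex.cpow_def_of_ne_zero (hgne ε hε)]
    have hconj14 : (starRingEnd ℂ) ((1:ℂ)/4) = (1:ℂ)/4 := by
      rw [map_div₀, map_one, map_ofNat]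
    have hnum : Tendsto (fun ε : ℝ => nuRH a b ((x:ℂ) - ε * Complex.I))
        (nhdsWithin 0 (Set.Ioi 0)) (nhds ((starRingEnd ℂ) L)) := by
      have h1 : Tendsto (fun ε : ℝ => (starRingEnd ℂ) (nuRH a b ((x:ℂ) + ε * Complex.I)))
          (nhdsWithin 0 (Set.Ioi 0)) (nhds ((starRingEnd ℂ) L)) :=
        (Complex.continuous_conj.tendsto _).comp hnup
      apply h1.congr'
      filter_upwards [self_mem_nhdsWithin] with ε hε
      have harg : (g ε).arg ≠ Real.pi := by
        intro h
        rw [Complex.arg_eq_pi_iff] at h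
        exact (hgim ε hε).ne' h.2
      have hb : ((x:ℂ) - ε * Complex.I - b) / ((x:ℂ) - ε * Complex.I - a)
          = (starRingEnd ℂ) (g ε) := by
        rw [hgdef]
        simp only [map_div₀, map_sub, map_add, map_mul, Complex.conj_ofReal, Complex.conj_I]
        ring_nf
      rw [show nuRH a b ((x:ℂ) - ε * Complex.I)
          = (((x:ℂ) - ε * Complex.I - b) / ((x:ℂ) - ε * Complex.I - a)) ^ ((1:ℂ)/4) from rfl,
        hb, Complex.conj_cpow _ _ harg, hconj14]
      rfl
    refine ⟨(1 / (2 * L)) • !![1, Complex.I; -Complex.I, 1] + (L / 2) • !![1, -Complex.I; Complex.I, 1],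
      (1 / (2 * (starRingEnd ℂ) L)) • !![1, Complex.I; -Complex.I, 1] +
        ((starRingEnd ℂ) L / 2) • !![1, -Complex.I; Complex.I, 1], ?_, ?_, ?_⟩
    · exact (Fcont hL0).tendsto.comp hnup
    · exact (Fcont hcL0).tendsto.comp hnum
    · have hkey : L = Complex.I * (starRingEnd ℂ) L := L_key hre him
      have := jump_id (c := (starRingEnd ℂ) L) hcL0
      rw [← hkey] at this
      exact this
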